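/- arXiv:0912.0372 — 3 statements merged into one kernel-verified Lean document; each statement's English description precedes it below -/
import Mathlib

section
/- Suppose the space G_T(Θ) = {∫_0^T v dS : v ∈ Θ} of attainable gains is a closed linear subspace of L²(P) and the constant 1 does not belong to G_T(Θ). Let f be the orthogonal projection of 1 onto G_T(Θ). Then D̃ := (1−f)/(1−E[f]) is well-defined (E[f] ≠ 1), E[D̃] = 1, and E[D̃ · G_T(v)] = 0 for all v ∈ Θ; thus the signed measure dP̃ = D̃ dP is a signed Θ-martingale measure. -/
open MeasureTheory


private lemma integrable_mul_of_memL2 {Ω : Type*} [MeasurableSpace Ω] {μ : Measure Ω}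
    {f g : Ω → ℝ} (hf : MemLp f 2 μ) (hg : MemLp g 2 μ) :
    Integrable (fun ω => f ω * g ω) μ := by
  have h1 := (hf.add hg).integrable_sq
  have h2 := hf.integrable_sq
  have h3 := hg.integrable_sq
  have h := ((h1.sub h2).sub h3).div_const 2
  exact h.congr (Filter.Eventually.of_forall fun ω => by simp only [Pi.sub_apply, Pi.add_apply]; ring)

/-- If the space of attainable gains `G ⊆ L²(P)` is a closed subspace not containing the
constant `1`, and `f` is the orthogonal projection of `1` onto `G` (i.e. `f ∈ G` and
`1 − f ⊥ G`), then `E[f] ≠ 1`, the density `D̃ = (1−f)/(1−E[f])` integrates to `1`, and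
`E[D̃ g] = 0` for all `g ∈ G`; so `dP̃ = D̃ dP` is a signed martingale measure. -/
theorem stmt4 {Ω : Type*} [MeasurableSpace Ω] (μ : Measure Ω) [IsProbabilityMeasure μ]
    (G : Submodule ℝ (Lp ℝ 2 μ)) (hGclosed : IsClosed (G : Set (Lp ℝ 2 μ)))
    (hone : ∀ g : Lp ℝ 2 μ, g ∈ G → ¬ ((g : Ω → ℝ) =ᵐ[μ] fun _ => (1:ℝ)))
    (f : Lp ℝ 2 μ) (hfG : f ∈ G)
    (hproj : ∀ g : Lp ℝ 2 μ, g ∈ G → ∫ ω, (1 - f ω) * g ω ∂μ = 0) :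
    (∫ ω, f ω ∂μ) ≠ 1 ∧
    (∫ ω, (1 - f ω) / (1 - ∫ ω', f ω' ∂μ) ∂μ) = 1 ∧
    (∀ g : Lp ℝ 2 μ, g ∈ G →
      ∫ ω, ((1 - f ω) / (1 - ∫ ω', f ω' ∂μ)) * g ω ∂μ = 0) := by
  have hf2 : MemLp (f : Ω → ℝ) 2 μ := Lp.memLp f
  have hint_f : Integrable (f : Ω → ℝ) μ := hf2.integrable (by norm_num)
  have h1f2 : MemLp (fun ω => 1 - f ω) 2 μ :=
    (memLp_const (1 : ℝ)).sub hf2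
  have hint_1f : Integrable (fun ω => 1 - f ω) μ := h1f2.integrable (by norm_num)
  have hsq : Integrable (fun ω => (1 - f ω) * (1 - f ω)) μ := integrable_mul_of_memL2 h1f2 h1f2
  have hff : ∫ ω, (1 - f ω) * f ω ∂μ = 0 := hproj f hfG
  -- key: E[f] ≠ 1
  have hEf : (∫ ω, f ω ∂μ) ≠ 1 := by
    intro hEf
    have hsqint : ∫ ω, (1 - f ω) * (1 - f ω) ∂μ = 0 := by
      have : ∀ ω, (1 - f ω) * (1 - f ω) = (1 - f ω) - (1 - f ω) * f ω := by
        intro ω; ring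
      rw [show (fun ω => (1 - f ω) * (1 - f ω)) = fun ω => (1 - f ω) - (1 - f ω) * f ω by
        funext ω; ring]
      rw [integral_sub hint_1f (integrable_mul_of_memL2 h1f2 hf2), hff,
        integral_sub (integrable_const 1) hint_f]
      simp [hEf]
    have hzero : (fun ω => (1 - f ω) * (1 - f ω)) =ᵐ[μ] 0 := by
      have := (integral_eq_zero_iff_of_nonneg (fun ω => mul_self_nonneg _) hsq).mp hsqint
      exact this
    apply hone f hfG
    filter_upwards [hzero] with ω hω
    have : (1 - f ω) * (1 - f ω) = 0 := hω
    have := mul_self_eq_zero.mp this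
    simpa using (sub_eq_zero.mp this).symm
  set c : ℝ := 1 - ∫ ω', f ω' ∂μ with hc
  have hcne : c ≠ 0 := sub_ne_zero.mpr (Ne.symm hEf)
  refine ⟨hEf, ?_, ?_⟩
  · rw [integral_div, integral_sub (integrable_const 1) hint_f]
    simp only [integral_const, measure_univ, probReal_univ, ENNReal.toReal_one, smul_eq_mul, one_mul, mul_one]
    exact div_self hcne
  · intro g hgG
    have : (fun ω => ((1 - f ω) / c) * g ω) = fun ω => ((1 - f ω) * g ω) / c := by
      funext ω; ring
    rw [this, integral_div, hproj g hgG, zero_div]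
end

section
/- With notation as above (1 ∉ G_T(Θ), f the projection of 1 onto G_T(Θ), D̃ = (1−f)/(1−E[f])), for every D ∈ L²(P) with E[D]=1 and E[D G_T(v)] = 0 for all v ∈ Θ, one has E[D²] ≥ E[D̃²]. Hence D̃ is the variance-optimal signed martingale density. -/
open MeasureTheory
open scoped RealInnerProductSpace

/-- Variance-optimality of `D̃ = (1−f)/(1−E[f])`: among all square-integrable densities
`D` of signed `Θ`-martingale measures (`E[D] = 1` and `D ⊥ G` in `L²`), the density `D̃`
has minimal second moment: `E[D²] ≥ E[D̃²]`. -/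
theorem stmt5 {Ω : Type*} [MeasurableSpace Ω] (μ : Measure Ω) [IsProbabilityMeasure μ]
    (G : Submodule ℝ (Lp ℝ 2 μ)) (hGclosed : IsClosed (G : Set (Lp ℝ 2 μ)))
    (hone : ∀ g : Lp ℝ 2 μ, g ∈ G → ¬ ((g : Ω → ℝ) =ᵐ[μ] fun _ => (1:ℝ)))
    (f : Lp ℝ 2 μ) (hfG : f ∈ G)
    (hproj : ∀ g : Lp ℝ 2 μ, g ∈ G → ∫ ω, (1 - f ω) * g ω ∂μ = 0)
    (D : Ω → ℝ) (hD2 : MemLp D 2 μ)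
    (hD1 : ∫ ω, D ω ∂μ = 1)
    (hDG : ∀ g : Lp ℝ 2 μ, g ∈ G → ∫ ω, D ω * g ω ∂μ = 0) :
    (∫ ω, (D ω)^2 ∂μ) ≥ ∫ ω, ((1 - f ω) / (1 - ∫ ω', f ω' ∂μ))^2 ∂μ := by
  classical
  set c : ℝ := 1 - ∫ ω', f ω' ∂μ with hc
  set DL : Lp ℝ 2 μ := hD2.toLp D with hDLdef
  have hDL_ae : (DL : Ω → ℝ) =ᵐ[μ] D := hD2.coeFn_toLp
  have honeM : MemLp (fun _ : Ω => (1:ℝ)) 2 μ := memLp_const 1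
  set oneL : Lp ℝ 2 μ := honeM.toLp _ with honeLdef
  have hone_ae : (oneL : Ω → ℝ) =ᵐ[μ] fun _ => (1:ℝ) := honeM.coeFn_toLp
  set u : Lp ℝ 2 μ := oneL - f with hudef
  have hu_ae : (u : Ω → ℝ) =ᵐ[μ] fun ω => 1 - f ω := by
    filter_upwards [Lp.coeFn_sub oneL f, hone_ae] with ω h1 h2
    simp [hudef] at h1 ⊢
    rw [h1, h2]
  have inner_eq : ∀ x y : Lp ℝ 2 μ, ⟪x, y⟫ = ∫ ω, x ω * y ω ∂μ := by
    intro x y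
    rw [MeasureTheory.L2.inner_def]
    simp [RCLike.inner_apply, mul_comm]
  have hfint : Integrable (fun ω => f ω) μ := (Lp.memLp f).integrable one_le_two
  have hDint : Integrable D μ := hD2.integrable one_le_two
  -- products of L² functions are integrable
  have hDf_int : Integrable (fun ω => D ω * f ω) μ := by
    have := MeasureTheory.L2.integrable_inner (𝕜 := ℝ) DL f
    refine this.congr ?_
    filter_upwards [hDL_ae] with ω h
    simp [RCLike.inner_apply, h, mul_comm]
  have huf_int : Integrable (fun ω => (1 - f ω) * f ω) μ := by
    have := MeasureTheory.L2.integrable_inner (𝕜 := ℝ) u f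
    refine this.congr ?_
    filter_upwards [hu_ae] with ω h
    simp [RCLike.inner_apply, h, mul_comm]
  -- ⟪DL, u⟫ = 1
  have h1 : ⟪DL, u⟫ = 1 := by
    rw [inner_eq]
    have e1 : ∫ ω, DL ω * u ω ∂μ = ∫ ω, D ω * (1 - f ω) ∂μ := by
      refine integral_congr_ae ?_
      filter_upwards [hDL_ae, hu_ae] with ω hd hu
      rw [hd, hu]
    rw [e1]
    have e2 : ∫ ω, D ω * (1 - f ω) ∂μ = ∫ ω, D ω ∂μ - ∫ ω, D ω * f ω ∂μ := by
      rw [← integral_sub hDint hDf_int]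
      refine integral_congr_ae (Filter.Eventually.of_forall fun ω => ?_)
      ring
    rw [e2, hD1, hDG f hfG, sub_zero]
  -- ⟪u, u⟫ = c
  have h2 : ⟪u, u⟫ = c := by
    rw [inner_eq]
    have e1 : ∫ ω, u ω * u ω ∂μ = ∫ ω, (1 - f ω) * (1 - f ω) ∂μ := by
      refine integral_congr_ae ?_
      filter_upwards [hu_ae] with ω hu
      rw [hu]
    rw [e1]
    have hsub : Integrable (fun ω => 1 - f ω) μ := (integrable_const (1:ℝ)).sub hfint
    have e2 : ∫ ω, (1 - f ω) * (1 - f ω) ∂μ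
        = ∫ ω, ((1 - f ω) - (1 - f ω) * f ω) ∂μ :=
      integral_congr_ae (Filter.Eventually.of_forall fun ω => by ring)
    rw [e2, integral_sub hsub huf_int, hproj f hfG, sub_zero,
      integral_sub (integrable_const (1:ℝ)) hfint]
    simp [hc]
  -- ⟪DL, DL⟫ = ∫ D²
  have h3 : ⟪DL, DL⟫ = ∫ ω, (D ω)^2 ∂μ := by
    rw [inner_eq]
    refine integral_congr_ae ?_
    filter_upwards [hDL_ae] with ω hd
    rw [hd]; ring
  -- c > 0
  have hc_nonneg : 0 ≤ c := by rw [← h2]; exact real_inner_self_nonneg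
  have hc_ne : c ≠ 0 := by
    intro h0
    have hu0 : u = 0 := by
      have : ⟪u, u⟫ = 0 := by rw [h2, h0]
      exact inner_self_eq_zero.mp this
    have : (f : Ω → ℝ) =ᵐ[μ] fun _ => (1:ℝ) := by
      have hz : (u : Ω → ℝ) =ᵐ[μ] fun _ => (0:ℝ) := by
        rw [hu0]; exact Lp.coeFn_zero ℝ 2 μ
      filter_upwards [hu_ae, hz] with ω h h'
      have : 1 - f ω = 0 := by rw [← h, h']
      linarith
    exact hone f hfG this
  have hcpos : 0 < c := lt_of_le_of_ne hc_nonneg (Ne.symm hc_ne)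
  -- Cauchy–Schwarz
  have hCS := real_inner_mul_inner_self_le DL u
  rw [h1, h2, h3, one_mul] at hCS
  -- compute the RHS
  have hRHS : ∫ ω, ((1 - f ω) / c)^2 ∂μ = 1 / c := by
    have e1 : ∫ ω, ((1 - f ω) / c)^2 ∂μ = (∫ ω, (1 - f ω) * (1 - f ω) ∂μ) / c^2 := by
      rw [← integral_div]
      refine integral_congr_ae (Filter.Eventually.of_forall fun ω => ?_)
      show ((1 - f ω) / c)^2 = (1 - f ω) * (1 - f ω) / c^2
      rw [div_pow]; ring
    have e2 : ∫ ω, (1 - f ω) * (1 - f ω) ∂μ = c := by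
      rw [← h2, inner_eq]
      refine integral_congr_ae ?_
      filter_upwards [hu_ae] with ω hu
      rw [hu]
    rw [e1, e2, sq]
    field_simp
  rw [ge_iff_le, hRHS, div_le_iff₀ hcpos]
  linarith [hCS]
end

section
/- Let H ∈ L²(Ω) with decomposition H = c + G + R where G ∈ G_T(Θ) and R is orthogonal in L²(P) to G_T(Θ) and E[R]=0. Then the expectation of H under the variance-optimal signed martingale measure P̃ (with density D̃ = (1−f)/(1−E[f])) equals c: E[D̃ H] = c. -/
open MeasureTheory

lemma int_mul {Ω : Type*} [MeasurableSpace Ω] {μ : Measure Ω} {a b : Ω → ℝ}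
    (ha : MemLp a 2 μ) (hb : MemLp b 2 μ) :
    Integrable (fun ω => a ω * b ω) μ := by
  rw [← memLp_one_iff_integrable]
  have := hb.smul (q := 2) (p := 2) (r := 1) ha
  exact this

/-- If `H = c + g + R` with `g ∈ G` (the attainable gains), `R ⊥ G` in `L²(P)` and
`E[R] = 0`, then the expectation of `H` under the variance-optimal signed martingale
measure, with density `D̃ = (1−f)/(1−E[f])`, equals `c`: `E[D̃ H] = c`. -/
theorem stmt6 {Ω : Type*} [MeasurableSpace Ω] (μ : Measure Ω) [IsProbabilityMeasure μ]
    (G : Submodule ℝ (Lp ℝ 2 μ)) (hGclosed : IsClosed (G : Set (Lp ℝ 2 μ)))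
    (hone : ∀ g : Lp ℝ 2 μ, g ∈ G → ¬ ((g : Ω → ℝ) =ᵐ[μ] fun _ => (1:ℝ)))
    (f : Lp ℝ 2 μ) (hfG : f ∈ G)
    (hproj : ∀ g : Lp ℝ 2 μ, g ∈ G → ∫ ω, (1 - f ω) * g ω ∂μ = 0)
    (H : Ω → ℝ) (hH : MemLp H 2 μ) (c : ℝ) (g : Lp ℝ 2 μ) (hg : g ∈ G)
    (R : Ω → ℝ) (hR2 : MemLp R 2 μ)
    (hRG : ∀ g' : Lp ℝ 2 μ, g' ∈ G → ∫ ω, R ω * g' ω ∂μ = 0)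
    (hR0 : ∫ ω, R ω ∂μ = 0)
    (hHdecomp : H =ᵐ[μ] fun ω => c + g ω + R ω) :
    ∫ ω, ((1 - f ω) / (1 - ∫ ω', f ω' ∂μ)) * H ω ∂μ = c := by
  have hf2 : MemLp (f : Ω → ℝ) 2 μ := Lp.memLp f
  have hg2 : MemLp (g : Ω → ℝ) 2 μ := Lp.memLp g
  have hfint : Integrable (f : Ω → ℝ) μ := hf2.integrable (by norm_num)
  have hgint : Integrable (g : Ω → ℝ) μ := hg2.integrable (by norm_num)
  have hRint : Integrable R μ := hR2.integrable (by norm_num)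
  have hone2 : MemLp (fun ω : Ω => 1 - f ω) 2 μ := (memLp_const 1).sub hf2
  -- E[f] ≠ 1
  have hff : ∫ ω, (1 - f ω) * f ω ∂μ = 0 := hproj f hfG
  have hm : (1 : ℝ) - ∫ ω', f ω' ∂μ ≠ 0 := by
    intro hEq
    have hEf : ∫ ω', f ω' ∂μ = 1 := by linarith
    have hff2 : Integrable (fun ω => f ω * f ω) μ := int_mul hf2 hf2
    have hexp : ∫ ω, (1 - f ω) * f ω ∂μ
        = (∫ ω, f ω ∂μ) - ∫ ω, f ω * f ω ∂μ := by
      rw [← integral_sub hfint hff2]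
      congr 1 with ω; ring
    have hf2int : ∫ ω, f ω * f ω ∂μ = 1 := by
      rw [hff, hEf] at hexp; linarith
    have hsqint : Integrable (fun ω => (1 - f ω) * (1 - f ω)) μ :=
      int_mul hone2 hone2
    have hsq : ∫ ω, (1 - f ω) * (1 - f ω) ∂μ = 0 := by
      have : ∀ ω, (1 - f ω) * (1 - f ω) = 1 - f ω - ((1 - f ω) * f ω) := by
        intro ω; ring
      have h1i : Integrable (fun ω => 1 - (f : Ω → ℝ) ω) μ := by
        exact (integrable_const 1).sub hfint
      have hmi : Integrable (fun ω => (1 - (f : Ω → ℝ) ω) * (f : Ω → ℝ) ω) μ :=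
        int_mul hone2 hf2
      have e1 : ∫ ω, (1 - (f : Ω → ℝ) ω) ∂μ = 1 - ∫ ω, (f : Ω → ℝ) ω ∂μ := by
        rw [integral_sub (integrable_const 1) hfint]; simp
      rw [integral_congr_ae (Filter.Eventually.of_forall this),
        integral_sub h1i hmi, e1, hff, hEf]
      norm_num
    have hzero : (fun ω => (1 - f ω) * (1 - f ω)) =ᵐ[μ] 0 := by
      rw [← integral_eq_zero_iff_of_nonneg (fun ω => mul_self_nonneg _) hsqint]
      exact hsq
    have : (f : Ω → ℝ) =ᵐ[μ] fun _ => (1:ℝ) := by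
      filter_upwards [hzero] with ω hω
      simp only [Pi.zero_apply] at hω
      have h := mul_self_eq_zero.mp hω
      linarith
    exact hone f hfG this
  -- rewrite the integral
  have hfH : Integrable (fun ω => (1 - f ω) * H ω) μ := int_mul hone2 hH
  have key : ∫ ω, (1 - f ω) * H ω ∂μ = c * (1 - ∫ ω', f ω' ∂μ) := by
    have hcongr : (fun ω => (1 - f ω) * H ω)
        =ᵐ[μ] fun ω => c * (1 - f ω) + (1 - f ω) * g ω + (1 - f ω) * R ω := by
      filter_upwards [hHdecomp] with ω hω
      rw [hω]; ring
    rw [integral_congr_ae hcongr]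
    have i1 : Integrable (fun ω => c * (1 - f ω)) μ := by
      exact ((integrable_const (1:ℝ)).sub hfint).const_mul c
    have i2 : Integrable (fun ω => (1 - f ω) * g ω) μ := int_mul hone2 hg2
    have i3 : Integrable (fun ω => (1 - f ω) * R ω) μ := int_mul hone2 hR2
    have i12 : Integrable (fun ω => c * (1 - f ω) + (1 - f ω) * g ω) μ := by
      exact i1.add i2
    rw [integral_add i12 i3, integral_add i1 i2]
    have e2 : ∫ ω, (1 - f ω) * g ω ∂μ = 0 := hproj g hg
    have e3 : ∫ ω, (1 - f ω) * R ω ∂μ = 0 := by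
      have : (fun ω => (1 - f ω) * R ω) =ᵐ[μ] fun ω => R ω - R ω * f ω := by
        filter_upwards with ω; ring
      rw [integral_congr_ae this, integral_sub hRint (int_mul hR2 hf2), hR0,
        hRG f hfG]
      simp
    have e1 : ∫ ω, (1 - (f : Ω → ℝ) ω) ∂μ = 1 - ∫ ω, (f : Ω → ℝ) ω ∂μ := by
      rw [integral_sub (integrable_const 1) hfint]; simp
    rw [e2, e3, integral_const_mul, e1]
    ring
  have : ∫ ω, ((1 - f ω) / (1 - ∫ ω', f ω' ∂μ)) * H ω ∂μ
      = (1 - ∫ ω', f ω' ∂μ)⁻¹ * ∫ ω, (1 - f ω) * H ω ∂μ := by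
    rw [← integral_const_mul]
    congr 1 with ω
    field_simp
  rw [this, key]
  field_simp
end
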